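/- Let λ be a nonzero real number, Δt > 0, and q a nonnegative integer. Then the divided difference of the exponential at the arithmetic progression inputs satisfies (Δt)^q · e[Δt·qλ, Δt·(q−1)λ, ..., Δt·λ, 0] = (1/q!) · ((e^{λΔt} − 1)/λ)^q. -/

import Mathlib

open scoped BigOperators

/-- Divided difference of the exponential at `q+1` real points,
given via its power-series expansion. -/
noncomputable def expDDR {q : ℕ} (y : Fin (q + 1) → ℝ) : ℝ :=
  ∑' k : Fin (q + 1) → ℕ, (∏ j, y j ^ k j) / ((Nat.factorial (q + ∑ j, k j) : ℝ))

lemma summable_pi_prod : ∀ (n : ℕ) (g : Fin n → ℕ → ℝ),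
    (∀ j m, 0 ≤ g j m) → (∀ j, Summable (g j)) →
    Summable fun k : Fin n → ℕ => ∏ j, g j (k j) := by
  intro n
  induction n with
  | zero =>
    intro g _ _
    exact Summable.of_finite
  | succ n ih =>
    intro g hpos hsum
    have h1 : Summable fun k : Fin n → ℕ => ∏ j, g j.succ (k j) :=
      ih (fun j => g j.succ) (fun j m => hpos _ _) (fun j => hsum _)
    have h1' : (0 : (Fin n → ℕ) → ℝ) ≤ fun k => ∏ j, g j.succ (k j) :=
      fun k => Finset.prod_nonneg fun j _ => hpos _ _
    have ha'' : (0 : ℕ → ℝ) ≤ g 0 := fun m => hpos 0 m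
    have key := Summable.mul_of_nonneg (hsum 0) h1 ha'' h1'
    rw [← (Fin.consEquiv fun _ : Fin (n+1) => ℕ).summable_iff]
    refine key.congr fun p => ?_
    show g 0 p.1 * ∏ j, g j.succ (p.2 j)
        = ∏ j, g j ((Fin.consEquiv fun _ : Fin (n+1) => ℕ) p j)
    rw [Fin.prod_univ_succ]
    simp [Fin.consEquiv]

lemma summable_aux (n r : ℕ) (y : Fin n → ℝ) :
    Summable fun k : Fin n → ℕ =>
      (∏ j, y j ^ k j) / (Nat.factorial (r + ∑ j, k j) : ℝ) := by
  have hG : Summable fun k : Fin n → ℕ => ∏ j, (|y j| ^ k j / (Nat.factorial (k j) : ℝ)) :=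
    summable_pi_prod n (fun j m => |y j| ^ m / (Nat.factorial m : ℝ))
      (fun j m => div_nonneg (pow_nonneg (abs_nonneg _) _) (Nat.cast_nonneg _))
      (fun j => Real.summable_pow_div_factorial _)
  rw [← summable_abs_iff]
  refine Summable.of_nonneg_of_le (fun k => abs_nonneg _) (fun k => ?_) hG
  have hden : ((∏ j, Nat.factorial (k j) : ℕ) : ℝ) ≤ (Nat.factorial (r + ∑ j, k j) : ℝ) := by
    have h1 : (∏ j, Nat.factorial (k j)) ≤ Nat.factorial (∑ j, k j) :=
      Nat.le_of_dvd (Nat.factorial_pos _) (Nat.prod_factorial_dvd_factorial_sum _ _)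
    exact_mod_cast le_trans h1 (Nat.factorial_le (Nat.le_add_left _ _))
  have hdpos : (0 : ℝ) < ((∏ j, Nat.factorial (k j) : ℕ) : ℝ) := by
    have : 0 < ∏ j, Nat.factorial (k j) :=
      Finset.prod_pos fun j _ => Nat.factorial_pos (k j)
    exact_mod_cast this
  rw [abs_div, Nat.abs_cast, Finset.abs_prod]
  have habs : ∀ j ∈ Finset.univ, |y j ^ k j| = |y j| ^ k j := fun j _ => abs_pow _ _
  rw [Finset.prod_congr rfl habs]
  calc (∏ j, |y j| ^ k j) / (Nat.factorial (r + ∑ j, k j) : ℝ)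
      ≤ (∏ j, |y j| ^ k j) / ((∏ j, Nat.factorial (k j) : ℕ) : ℝ) := by
        apply div_le_div_of_nonneg_left _ hdpos hden
        exact Finset.prod_nonneg fun j _ => pow_nonneg (abs_nonneg _) _
    _ = ∏ j, (|y j| ^ k j / (Nat.factorial (k j) : ℝ)) := by
        rw [Finset.prod_div_distrib]
        push_cast
        ring

lemma expDDR_split (q : ℕ) (y : Fin (q + 2) → ℝ) (p : Fin (q + 2)) :
    (∑' k : Fin (q + 2) → ℕ, (∏ j, y j ^ k j) / (Nat.factorial (q + ∑ j, k j) : ℝ)) =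
      expDDR (fun j => y (p.succAbove j)) + y p * expDDR y := by
  classical
  set U : (Fin (q + 2) → ℕ) → ℝ :=
    fun k => (∏ j, y j ^ k j) / (Nat.factorial (q + ∑ j, k j) : ℝ) with hUdef
  have hU : Summable U := summable_aux (q + 2) q y
  set e := Fin.insertNthEquiv (fun _ : Fin (q + 2) => ℕ) p with hedef
  set f : ℕ × (Fin (q + 1) → ℕ) → ℝ := fun mp =>
    y p ^ mp.1 * ((∏ j, y (p.succAbove j) ^ mp.2 j) /
      (Nat.factorial (q + (mp.1 + ∑ j, mp.2 j)) : ℝ)) with hfdef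
  have hcomp : ∀ mp : ℕ × (Fin (q + 1) → ℕ), U (e mp) = f mp := by
    rintro ⟨m, k'⟩
    have hprod : (∏ j, y j ^ (p.insertNth m k') j)
        = y p ^ m * ∏ j, y (p.succAbove j) ^ k' j := by
      have h := Fin.prod_univ_succAbove (fun j => y j ^ (p.insertNth m k') j) p
      simpa using h
    have hsum2 : (∑ j, (p.insertNth m k') j) = m + ∑ j, k' j := by
      have h := Fin.sum_univ_succAbove (fun j => (p.insertNth m k') j) p
      simpa using h
    show U (p.insertNth m k') = _
    rw [hUdef]
    simp only []
    rw [hprod, hsum2, hfdef]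
    simp only []
    ring
  have hf : Summable f := by
    have h2 : Summable (U ∘ e) := e.summable_iff.2 hU
    exact h2.congr hcomp
  have step1 : (∑' k, U k) = ∑' mp, f mp := by
    rw [← e.tsum_eq U]
    exact tsum_congr hcomp
  have step2 : (∑' mp, f mp) = ∑' m, ∑' k', f (m, k') := Summable.tsum_prod hf
  have hg : Summable fun m => ∑' k', f (m, k') := hf.prod
  have step3 : (∑' m, ∑' k', f (m, k'))
      = (∑' k', f (0, k')) + ∑' m, ∑' k', f (m + 1, k') := Summable.tsum_eq_zero_add hg
  have hzero : (∑' k' : Fin (q + 1) → ℕ, f (0, k')) = expDDR (fun j => y (p.succAbove j)) := by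
    refine tsum_congr fun k' => ?_
    rw [hfdef]
    simp
  have hF2 : Summable fun mp : ℕ × (Fin (q + 1) → ℕ) => f (mp.1 + 1, mp.2) := by
    refine hf.comp_injective (i := fun mp : ℕ × (Fin (q + 1) → ℕ) => (mp.1 + 1, mp.2)) ?_
    intro a b hab
    simpa [Prod.ext_iff] using hab
  have step4 : (∑' m, ∑' k', f (m + 1, k'))
      = ∑' mp : ℕ × (Fin (q + 1) → ℕ), f (mp.1 + 1, mp.2) := (Summable.tsum_prod hF2).symm
  set V : (Fin (q + 2) → ℕ) → ℝ :=
    fun k => (∏ j, y j ^ k j) / (Nat.factorial (q + 1 + ∑ j, k j) : ℝ) with hVdef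
  have hVcomp : ∀ mp : ℕ × (Fin (q + 1) → ℕ), f (mp.1 + 1, mp.2) = y p * V (e mp) := by
    rintro ⟨m, k'⟩
    have hprod : (∏ j, y j ^ (p.insertNth m k') j)
        = y p ^ m * ∏ j, y (p.succAbove j) ^ k' j := by
      have h := Fin.prod_univ_succAbove (fun j => y j ^ (p.insertNth m k') j) p
      simpa using h
    have hsum2 : (∑ j, (p.insertNth m k') j) = m + ∑ j, k' j := by
      have h := Fin.sum_univ_succAbove (fun j => (p.insertNth m k') j) p
      simpa using h
    show f (m + 1, k') = y p * V (p.insertNth m k')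
    rw [hfdef, hVdef]
    simp only []
    rw [hprod, hsum2]
    have harith : q + (m + 1 + ∑ j, k' j) = q + 1 + (m + ∑ j, k' j) := by omega
    rw [harith, pow_succ]
    ring
  have step5 : (∑' mp : ℕ × (Fin (q + 1) → ℕ), f (mp.1 + 1, mp.2)) = y p * expDDR y := by
    rw [tsum_congr hVcomp, tsum_mul_left]
    congr 1
    rw [e.tsum_eq V]
    rfl
  rw [show (∑' k : Fin (q + 2) → ℕ, (∏ j, y j ^ k j) / (Nat.factorial (q + ∑ j, k j) : ℝ))
      = ∑' k, U k from rfl, step1, step2, step3, hzero, step4, step5]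

lemma expDDR_rec (q : ℕ) (y : Fin (q + 2) → ℝ) :
    (y 0 - y (Fin.last (q + 1))) * expDDR y =
      expDDR (fun j => y j.castSucc) - expDDR (fun j => y j.succ) := by
  have h0 := expDDR_split q y 0
  have hl := expDDR_split q y (Fin.last (q + 1))
  rw [show (fun j : Fin (q + 1) => y ((0 : Fin (q + 2)).succAbove j))
      = fun j => y j.succ from by funext j; rw [Fin.succAbove_zero]] at h0
  rw [show (fun j : Fin (q + 1) => y ((Fin.last (q + 1)).succAbove j))
      = fun j => y j.castSucc from by funext j; rw [Fin.succAbove_last]] at hl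
  nlinarith [h0, hl]

lemma expDDR_const (x : ℝ) : expDDR (fun _ : Fin 1 => x) = Real.exp x := by
  have h := (Equiv.funUnique (Fin 1) ℕ).symm.tsum_eq
    (fun k : Fin 1 → ℕ => (∏ j, x ^ k j) / (Nat.factorial (0 + ∑ j, k j) : ℝ))
  rw [expDDR, ← h]
  have : ∀ n : ℕ, (∏ j : Fin 1, x ^ ((Equiv.funUnique (Fin 1) ℕ).symm n) j) /
      (Nat.factorial (0 + ∑ j : Fin 1, ((Equiv.funUnique (Fin 1) ℕ).symm n) j) : ℝ)
      = x ^ n / (Nat.factorial n : ℝ) := by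
    intro n
    simp [Equiv.funUnique]
  rw [tsum_congr this, Real.exp_eq_exp_ℝ, NormedSpace.exp_eq_tsum_div]

lemma expE (a : ℝ) (ha : a ≠ 0) : ∀ (q : ℕ) (x : ℝ),
    expDDR (fun j : Fin (q + 1) => x + a * ((q : ℝ) - ((j : ℕ) : ℝ))) =
      Real.exp x * ((Real.exp a - 1) / a) ^ q / (Nat.factorial q : ℝ) := by
  intro q
  induction q with
  | zero =>
    intro x
    have hy : (fun j : Fin 1 => x + a * (((0 : ℕ) : ℝ) - ((j : ℕ) : ℝ))) = fun _ => x := by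
      funext j
      have : (j : ℕ) = 0 := by omega
      simp [this]
    simpa [hy] using expDDR_const x
  | succ q ih =>
    intro x
    set y : Fin (q + 2) → ℝ :=
      fun j => x + a * (((q + 1 : ℕ) : ℝ) - ((j : ℕ) : ℝ)) with hy
    have hrec := expDDR_rec q y
    have hcast : (fun j : Fin (q + 1) => y j.castSucc)
        = fun j : Fin (q + 1) => (x + a) + a * ((q : ℝ) - ((j : ℕ) : ℝ)) := by
      funext j
      rw [hy]
      simp only [Fin.coe_castSucc]
      push_cast
      ring
    have hsucc : (fun j : Fin (q + 1) => y j.succ)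
        = fun j : Fin (q + 1) => x + a * ((q : ℝ) - ((j : ℕ) : ℝ)) := by
      funext j
      rw [hy]
      simp only [Fin.val_succ]
      push_cast
      ring
    rw [hcast, ih (x + a), hsucc, ih x] at hrec
    have hylast : y (Fin.last (q + 1)) = x := by
      rw [hy]; simp
    have hy0 : y 0 = x + a * ((q : ℝ) + 1) := by
      rw [hy]; push_cast; simp
    rw [hylast, hy0] at hrec
    have hne : a * ((q : ℝ) + 1) ≠ 0 := by
      apply mul_ne_zero ha
      positivity
    apply mul_left_cancel₀ hne
    rw [show x + a * ((q : ℝ) + 1) - x = a * ((q : ℝ) + 1) from by ring] at hrec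
    rw [hrec]
    have hfq : ((Nat.factorial q : ℝ)) ≠ 0 := Nat.cast_ne_zero.2 (Nat.factorial_ne_zero q)
    have hfq1 : ((Nat.factorial (q + 1) : ℝ)) ≠ 0 := Nat.cast_ne_zero.2 (Nat.factorial_ne_zero _)
    rw [Real.exp_add, Nat.factorial_succ]
    push_cast
    field_simp
    have hB : a * ((Real.exp a - 1) / a) = Real.exp a - 1 := by field_simp
    linear_combination (-((Real.exp a - 1) / a) ^ q) * hB

/-- for `λ ≠ 0`, `Δt > 0` and the arithmetic-progression inputs
`Δt·qλ, Δt·(q−1)λ, ..., Δt·λ, 0`,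
`(Δt)^q · e[Δt·qλ, ..., Δt·λ, 0] = (1/q!) · ((e^{λΔt} − 1)/λ)^q`. -/
theorem expDDR_arith_progression (q : ℕ) (lam Δt : ℝ) (hlam : lam ≠ 0) (hΔt : 0 < Δt) :
    Δt ^ q * expDDR (fun j : Fin (q + 1) => Δt * ((q - (j : ℕ) : ℕ) : ℝ) * lam) =
      (1 / (Nat.factorial q : ℝ)) * ((Real.exp (lam * Δt) - 1) / lam) ^ q := by
  have ha : lam * Δt ≠ 0 := mul_ne_zero hlam hΔt.ne'
  have hpts : (fun j : Fin (q + 1) => Δt * ((q - (j : ℕ) : ℕ) : ℝ) * lam)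
      = fun j : Fin (q + 1) => (0 : ℝ) + (lam * Δt) * ((q : ℝ) - ((j : ℕ) : ℝ)) := by
    funext j
    have hj : (j : ℕ) ≤ q := Fin.is_le j
    rw [Nat.cast_sub hj]
    ring
  rw [hpts, expE (lam * Δt) ha q 0, Real.exp_zero]
  have hfq : ((Nat.factorial q : ℝ)) ≠ 0 := Nat.cast_ne_zero.2 (Nat.factorial_ne_zero q)
  rw [div_pow, div_pow, mul_pow]
  field_simp
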